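/- Under a gauge transformation γ := a^{-1}θa + a^{-1}da, where a: Z → GL_n(ℂ) is smooth and θ is an M_n(ℂ)-valued 1-form, the Chern-Simons form transforms as cs(γ) = cs(θ) + d Tr(θ ∧ da·a^{-1}) − (1/3) Tr((a^{-1}da)³). -/
import Mathlib


/-!
Matrix-valued differential forms on the manifold `Z` are formalized abstractly as a
differential graded algebra `A` (the `M_n(ℂ)`-valued forms, including degree-0 forms,
i.e. matrix-valued functions), with scalar forms `S`, exterior derivatives `dA`, `dS`,
pointwise matrix trace `tr` and a degree predicate.  A smooth map `a : Z → GL_n(ℂ)`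
is a unit `u` of `A` of degree `0`.  The gauge transformed connection form is
`γ = u⁻¹ θ u + u⁻¹ du`, and the Chern-Simons form transforms as
`cs(γ) = cs(θ) + d Tr(θ ∧ du·u⁻¹) − (1/3) Tr((u⁻¹du)³)`.
-/
theorem stmt_2
    {A S : Type*} [Ring A] [Algebra ℂ A] [CommRing S] [Algebra ℂ S]
    (dA : A →ₗ[ℂ] A) (dS : S →ₗ[ℂ] S) (tr : A →ₗ[ℂ] S)
    (deg : A → ℕ → Prop)
    (hdeg_d : ∀ a k, deg a k → deg (dA a) (k + 1))
    (hdeg_mul : ∀ a b k l, deg a k → deg b l → deg (a * b) (k + l))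
    (hdd : ∀ a : A, dA (dA a) = 0)
    (hLeib : ∀ (a b : A) (k : ℕ), deg a k →
      dA (a * b) = dA a * b + ((-1 : ℂ) ^ k) • (a * dA b))
    (htr_cyc : ∀ (a b : A) (k l : ℕ), deg a k → deg b l →
      tr (a * b) = ((-1 : ℂ) ^ (k * l)) • tr (b * a))
    (htrd : ∀ a : A, dS (tr a) = tr (dA a))
    (θ : A) (hθ : deg θ 1)
    (u : Aˣ) (hu : deg (u : A) 0) (hu' : deg ((u⁻¹ : Aˣ) : A) 0) :
    tr ((((u⁻¹ : Aˣ) : A) * θ * (u : A) + ((u⁻¹ : Aˣ) : A) * dA (u : A))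
          * dA (((u⁻¹ : Aˣ) : A) * θ * (u : A) + ((u⁻¹ : Aˣ) : A) * dA (u : A)))
      + ((2 : ℂ) / 3) • tr ((((u⁻¹ : Aˣ) : A) * θ * (u : A) + ((u⁻¹ : Aˣ) : A) * dA (u : A))
          * (((u⁻¹ : Aˣ) : A) * θ * (u : A) + ((u⁻¹ : Aˣ) : A) * dA (u : A))
          * (((u⁻¹ : Aˣ) : A) * θ * (u : A) + ((u⁻¹ : Aˣ) : A) * dA (u : A)))
      = (tr (θ * dA θ) + ((2 : ℂ) / 3) • tr (θ * θ * θ))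
        + dS (tr (θ * (dA (u : A) * ((u⁻¹ : Aˣ) : A))))
        - ((1 : ℂ) / 3) • tr ((((u⁻¹ : Aˣ) : A) * dA (u : A))
            * (((u⁻¹ : Aˣ) : A) * dA (u : A)) * (((u⁻¹ : Aˣ) : A) * dA (u : A))) := by
  set v : A := ((u⁻¹ : Aˣ) : A) with hv
  have hvu : v * (u : A) = 1 := u.inv_mul
  have huv : (u : A) * v = 1 := u.mul_inv
  have huv1 : ∀ x : A, (u : A) * (v * x) = x := fun x => by rw [← mul_assoc, huv, one_mul]
  have hvu1 : ∀ x : A, v * ((u : A) * x) = x := fun x => by rw [← mul_assoc, hvu, one_mul]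
  have L0 : ∀ a b : A, deg a 0 → dA (a * b) = dA a * b + a * dA b := by
    intro a b h; rw [hLeib a b 0 h]; simp
  have L1 : ∀ a b : A, deg a 1 → dA (a * b) = dA a * b - a * dA b := by
    intro a b h; rw [hLeib a b 1 h]; simp [sub_eq_add_neg]
  have C0 : ∀ (a b : A) (l : ℕ), deg a 0 → deg b l → tr (a * b) = tr (b * a) := by
    intro a b l ha hb; rw [htr_cyc a b 0 l ha hb]; simp
  have C12 : ∀ (a b : A), deg a 1 → deg b 2 → tr (a * b) = tr (b * a) := by
    intro a b ha hb; rw [htr_cyc a b 1 2 ha hb]; norm_num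
  have deg1 : deg (1 : A) 0 := hvu ▸ hdeg_mul v (u : A) 0 0 hu' hu
  have d1 : dA (1 : A) = 0 := by
    have h := L0 1 1 deg1
    rw [mul_one, one_mul, mul_one] at h
    exact (left_eq_add.mp h)
  have hdvu : (0 : A) = dA v * u + v * dA (u : A) := by
    have h := L0 v u hu'
    rw [hvu, d1] at h
    exact h
  have dv : dA v = -(v * (dA (u : A) * v)) := by
    have h2 := congrArg (· * v) hdvu.symm
    simp only [add_mul, mul_assoc, zero_mul] at h2
    rw [huv, mul_one] at h2
    exact eq_neg_of_add_eq_zero_left h2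
  -- degrees
  have hβ : deg (dA (u : A)) 1 := hdeg_d _ 0 hu
  have hdθ : deg (dA θ) 2 := hdeg_d θ 1 hθ
  have dβv : deg (dA (u : A) * v) 1 := hdeg_mul _ _ 1 0 hβ hu'
  have dvβ : deg (v * dA (u : A)) 1 := hdeg_mul _ _ 0 1 hu' hβ
  have dθθ : deg (θ * θ) 2 := hdeg_mul θ θ 1 1 hθ hθ
  have dθβv : deg (θ * (dA (u : A) * v)) 2 := hdeg_mul _ _ 1 1 hθ dβv
  have dXz : deg (dA (u : A) * (v * (dA (u : A) * v))) 2 :=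
    hdeg_mul _ _ 1 1 hβ (hdeg_mul v _ 0 1 hu' dβv)
  have hcol : ∀ (x : A) (k : ℕ), deg x k → tr (v * (x * (u : A))) = tr x := by
    intro x k hx
    rw [C0 v (x * (u : A)) k hu' (hdeg_mul x (u : A) k 0 hx hu), mul_assoc, huv, mul_one]
  have hC0v : ∀ (x : A) (k : ℕ), deg x k → tr (v * x) = tr (x * v) :=
    fun x k hx => C0 v x k hu' hx
  -- the two expansions
  have key : (v * θ * (u : A) + v * dA (u : A)) * dA (v * θ * (u : A) + v * dA (u : A))
      = -(v * (θ * (dA (u : A) * (v * (θ * (u : A))))))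
        + v * (θ * (dA θ * (u : A)))
        - v * (θ * (θ * dA (u : A)))
        - v * (θ * (dA (u : A) * (v * dA (u : A))))
        - v * (dA (u : A) * (v * (dA (u : A) * (v * (θ * (u : A))))))
        + v * (dA (u : A) * (v * (dA θ * (u : A))))
        - v * (dA (u : A) * (v * (θ * dA (u : A))))
        - v * (dA (u : A) * (v * (dA (u : A) * (v * dA (u : A))))) := by
    rw [map_add, mul_assoc, L0 v (θ * (u : A)) hu', L1 θ (u : A) hθ,
      L0 v (dA (u : A)) hu', hdd, dv]
    simp only [mul_add, add_mul, mul_sub, sub_mul, mul_neg, neg_mul, mul_zero, add_zero,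
      mul_one, one_mul, mul_assoc, huv1, hvu1]
    abel
  have keycube : (v * θ * (u : A) + v * dA (u : A)) * (v * θ * (u : A) + v * dA (u : A))
        * (v * θ * (u : A) + v * dA (u : A))
      = v * (θ * (θ * (θ * (u : A))))
        + v * (θ * (θ * dA (u : A)))
        + v * (θ * (dA (u : A) * (v * (θ * (u : A)))))
        + v * (dA (u : A) * (v * (θ * (θ * (u : A)))))
        + v * (θ * (dA (u : A) * (v * dA (u : A))))
        + v * (dA (u : A) * (v * (θ * dA (u : A))))
        + v * (dA (u : A) * (v * (dA (u : A) * (v * (θ * (u : A))))))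
        + v * (dA (u : A) * (v * (dA (u : A) * (v * dA (u : A))))) := by
    simp only [mul_add, add_mul, mul_assoc, huv1, hvu1]
    abel
  -- trace reductions
  have A1 : tr (v * (θ * (dA (u : A) * (v * (θ * (u : A))))))
      = tr (θ * (θ * (dA (u : A) * v))) := by
    rw [show v * (θ * (dA (u : A) * (v * (θ * (u : A)))))
        = v * ((θ * (dA (u : A) * (v * θ))) * (u : A)) from by noncomm_ring,
      hcol _ _ (hdeg_mul θ _ 1 2 hθ (hdeg_mul _ _ 1 1 hβ (hdeg_mul v θ 0 1 hu' hθ))),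
      show θ * (dA (u : A) * (v * θ)) = (θ * (dA (u : A) * v)) * θ from by noncomm_ring,
      ← C12 θ _ hθ dθβv]
  have A2 : tr (v * (θ * (dA θ * (u : A)))) = tr (θ * dA θ) := by
    rw [show v * (θ * (dA θ * (u : A))) = v * ((θ * dA θ) * (u : A)) from by noncomm_ring,
      hcol _ _ (hdeg_mul θ (dA θ) 1 2 hθ hdθ)]
  have A3 : tr (v * (θ * (θ * dA (u : A)))) = tr (θ * (θ * (dA (u : A) * v))) := by
    rw [hC0v _ 3 (hdeg_mul θ _ 1 2 hθ (hdeg_mul θ _ 1 1 hθ hβ)),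
      show (θ * (θ * dA (u : A))) * v = θ * (θ * (dA (u : A) * v)) from by noncomm_ring]
  have A4 : tr (v * (θ * (dA (u : A) * (v * dA (u : A)))))
      = tr (θ * (dA (u : A) * (v * (dA (u : A) * v)))) := by
    rw [hC0v _ 3 (hdeg_mul θ _ 1 2 hθ (hdeg_mul _ _ 1 1 hβ dvβ)),
      show (θ * (dA (u : A) * (v * dA (u : A)))) * v
        = θ * (dA (u : A) * (v * (dA (u : A) * v))) from by noncomm_ring]
  have A5 : tr (v * (dA (u : A) * (v * (dA (u : A) * (v * (θ * (u : A)))))))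
      = tr (θ * (dA (u : A) * (v * (dA (u : A) * v)))) := by
    rw [show v * (dA (u : A) * (v * (dA (u : A) * (v * (θ * (u : A))))))
        = v * ((dA (u : A) * (v * (dA (u : A) * (v * θ)))) * (u : A)) from by noncomm_ring,
      hcol _ _ (hdeg_mul _ _ 1 2 hβ (hdeg_mul v _ 0 2 hu'
        (hdeg_mul _ _ 1 1 hβ (hdeg_mul v θ 0 1 hu' hθ)))),
      show dA (u : A) * (v * (dA (u : A) * (v * θ)))
        = (dA (u : A) * (v * (dA (u : A) * v))) * θ from by noncomm_ring,
      ← C12 θ _ hθ dXz]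
  have A6 : tr (v * (dA (u : A) * (v * (dA θ * (u : A))))) = tr (dA θ * (dA (u : A) * v)) := by
    rw [show v * (dA (u : A) * (v * (dA θ * (u : A))))
        = v * ((dA (u : A) * (v * dA θ)) * (u : A)) from by noncomm_ring,
      hcol _ _ (hdeg_mul _ _ 1 2 hβ (hdeg_mul v _ 0 2 hu' hdθ)),
      show dA (u : A) * (v * dA θ) = (dA (u : A) * v) * dA θ from by noncomm_ring,
      C12 _ _ dβv hdθ]
  have A7 : tr (v * (dA (u : A) * (v * (θ * dA (u : A)))))
      = tr (θ * (dA (u : A) * (v * (dA (u : A) * v)))) := by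
    rw [hC0v _ 3 (hdeg_mul _ _ 1 2 hβ (hdeg_mul v _ 0 2 hu' (hdeg_mul θ _ 1 1 hθ hβ))),
      show (dA (u : A) * (v * (θ * dA (u : A)))) * v
        = (dA (u : A) * v) * (θ * (dA (u : A) * v)) from by noncomm_ring,
      C12 _ _ dβv dθβv,
      show (θ * (dA (u : A) * v)) * (dA (u : A) * v)
        = θ * (dA (u : A) * (v * (dA (u : A) * v))) from by noncomm_ring]
  have A8 : tr (v * (dA (u : A) * (v * (dA (u : A) * (v * dA (u : A))))))
      = tr ((v * dA (u : A)) * (v * dA (u : A)) * (v * dA (u : A))) := by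
    rw [show (v * dA (u : A)) * (v * dA (u : A)) * (v * dA (u : A))
      = v * (dA (u : A) * (v * (dA (u : A) * (v * dA (u : A))))) from by noncomm_ring]
  have B1 : tr (v * (θ * (θ * (θ * (u : A))))) = tr (θ * θ * θ) := by
    rw [show v * (θ * (θ * (θ * (u : A)))) = v * ((θ * θ * θ) * (u : A)) from by noncomm_ring,
      hcol _ _ (hdeg_mul _ θ 2 1 dθθ hθ)]
  have B4 : tr (v * (dA (u : A) * (v * (θ * (θ * (u : A))))))
      = tr (θ * (θ * (dA (u : A) * v))) := by
    rw [show v * (dA (u : A) * (v * (θ * (θ * (u : A)))))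
        = v * ((dA (u : A) * (v * (θ * θ))) * (u : A)) from by noncomm_ring,
      hcol _ _ (hdeg_mul _ _ 1 2 hβ (hdeg_mul v _ 0 2 hu' dθθ)),
      show dA (u : A) * (v * (θ * θ)) = (dA (u : A) * v) * (θ * θ) from by noncomm_ring,
      C12 _ _ dβv dθθ,
      show (θ * θ) * (dA (u : A) * v) = θ * (θ * (dA (u : A) * v)) from by noncomm_ring]
  have hdβv2 : dA (dA (u : A) * v) = dA (u : A) * (v * (dA (u : A) * v)) := by
    rw [L1 _ v hβ, hdd, zero_mul, dv]
    simp [mul_neg]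
  have hds : dS (tr (θ * (dA (u : A) * v)))
      = tr (dA θ * (dA (u : A) * v)) - tr (θ * (dA (u : A) * (v * (dA (u : A) * v)))) := by
    rw [htrd, L1 θ _ hθ, hdβv2, map_sub]
  rw [key, keycube]
  simp only [map_add, map_sub, map_neg]
  rw [A1, A2, A3, A4, A5, A6, A7, A8, B1, B4, hds]
  module
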